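/- The language Equal = {w ∈ {0,1}* : the number of 0s in w equals the number of 1s in w} is not in REG/n; i.e., there is no advice function h with |h(n)| = n and no regular language L over a track alphabet such that for all x, x ∈ Equal iff ⟨x, h(|x|)⟩ ∈ L. -/

import Mathlib

/-- A language `P` over `σ` is in `REG/n` if there are a finite advice
alphabet `Γ`, an advice function `h : ℕ → Γ*` with `|h n| = n`, and a regular
language `L` over the track alphabet `σ × Γ` such that `x ∈ P` iff the track
string `⟨x, h(|x|)⟩` belongs to `L`. -/
def InREGn {σ : Type} (P : Language σ) : Prop :=
  ∃ (Γ : Type) (_ : Fintype Γ) (h : ℕ → List Γ),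
    (∀ n, (h n).length = n) ∧
    ∃ L : Language (σ × Γ), L.IsRegular ∧
      ∀ x : List σ, x ∈ P ↔ x.zip (h x.length) ∈ L

/-- The language `Equal = {w ∈ {0,1}* : #₀(w) = #₁(w)}` (binary strings with
equally many `0`s and `1`s, `0` encoded as `false` and `1` as `true`)
is not in `REG/n`. -/
theorem equal_not_in_REGn :
    ¬ InREGn { x : List Bool | x.count false = x.count true } := by
  rintro ⟨Γ, _, h, hlen, L, ⟨Q, _, M, hM⟩, hiff⟩
  classical
  set N := Fintype.card Q with hN
  set A := h (2 * N) with hA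
  have hAlen : A.length = 2 * N := hlen _
  -- prefix strings
  set u : ℕ → List Bool := fun i => List.replicate i false ++ List.replicate (N - i) true
    with hu
  have hulen : ∀ i ≤ N, (u i).length = N := by
    intro i hi
    simp [hu, Nat.add_sub_cancel' hi]
  -- state after reading prefix i
  set f : Fin (N + 1) → Q := fun i => M.eval ((u i).zip (A.take N)) with hf
  obtain ⟨i, j, hij, hfij⟩ : ∃ i j : Fin (N + 1), i ≠ j ∧ f i = f j := by
    have : Fintype.card Q < Fintype.card (Fin (N + 1)) := by simp [hN]
    obtain ⟨i, j, hij, hfij⟩ := Fintype.exists_ne_map_eq_of_card_lt f this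
    exact ⟨i, j, hij, hfij⟩
  -- common suffix
  set s : List Bool := List.replicate (N - (i : ℕ)) false ++ List.replicate (i : ℕ) true
    with hs
  have hi' : (i : ℕ) ≤ N := Nat.lt_succ_iff.mp i.isLt
  have hj' : (j : ℕ) ≤ N := Nat.lt_succ_iff.mp j.isLt
  have hslen : s.length = N := by simp [hs, Nat.sub_add_cancel hi']
  have hAtake : (A.take N).length = N := by simp [hAlen]; omega
  -- the two full strings
  set w1 : List Bool := u i ++ s with hw1
  set w2 : List Bool := u j ++ s with hw2
  have hw1len : w1.length = 2 * N := by
    simp only [hw1, List.length_append, hulen _ hi', hslen]; ring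
  have hw2len : w2.length = 2 * N := by
    simp only [hw2, List.length_append, hulen _ hj', hslen]; ring
  -- zip decomposition
  have hzip : ∀ (v : List Bool), v.length = N →
      (v ++ s).zip A = v.zip (A.take N) ++ s.zip (A.drop N) := by
    intro v hv
    conv_lhs => rw [← List.take_append_drop N A]
    rw [List.zip_append (by rw [hv, hAtake])]
  -- eval agreement
  have heval : M.eval (w1.zip A) = M.eval (w2.zip A) := by
    rw [hw1, hw2, hzip _ (hulen _ hi'), hzip _ (hulen _ hj')]
    simp only [DFA.eval]
    rw [DFA.evalFrom_of_append, DFA.evalFrom_of_append]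
    have := hfij
    simp only [hf, DFA.eval] at this
    rw [this]
  -- membership in L agreement
  have hLiff : w1 ∈ { x : List Bool | x.count false = x.count true } ↔
      w2 ∈ { x : List Bool | x.count false = x.count true } := by
    refine (hiff w1).trans (Iff.trans ?_ (hiff w2).symm)
    rw [hw1len, hw2len, ← hA, ← hM, DFA.mem_accepts, DFA.mem_accepts, heval]
  -- but counts differ
  have hcount : ∀ (b : Bool) (k m : ℕ),
      (List.replicate k false ++ List.replicate m true).count b =
        if b then m else k := by
    intro b k m
    cases b <;> simp [List.count_replicate]
  have hc1 : w1 ∈ { x : List Bool | x.count false = x.count true } := by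
    simp only [Set.mem_setOf_eq, hw1, hu, hs, List.count_append, hcount,
      List.count_replicate]
    simp
    omega
  have hc2 : w2 ∈ { x : List Bool | x.count false = x.count true } := hLiff.mp hc1
  simp only [Set.mem_setOf_eq, hw2, hu, hs, List.count_append, List.count_replicate] at hc2
  have hne : (i : ℕ) ≠ (j : ℕ) := fun e => hij (Fin.ext e)
  simp at hc2
  omega
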